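/- For a positive semidefinite operator A on a bipartite Hilbert space H_A ⊗ H_B, and a projection P on H_A, the support of the partial trace Tr_B(A) is contained in range(P) if and only if the support of A is contained in range(P ⊗ I_B). -/

import Mathlib

open Matrix Kronecker
open scoped ComplexOrder

/-- A projection: a self-adjoint idempotent matrix. -/
def IsProjection {I : Type*} [Fintype I] [DecidableEq I]
    (P : Matrix I I ℂ) : Prop :=
  P * P = P ∧ Pᴴ = P

/-- The partial trace over the second factor `H_B`. -/
noncomputable def ptrB {a b : ℕ} (A : Matrix (Fin a × Fin b) (Fin a × Fin b) ℂ) :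
    Matrix (Fin a) (Fin a) ℂ :=
  fun i j => ∑ k : Fin b, A (i, k) (j, k)

lemma ptrB_kron_mul {a b : ℕ} (P : Matrix (Fin a) (Fin a) ℂ)
    (A : Matrix (Fin a × Fin b) (Fin a × Fin b) ℂ) :
    ptrB ((P ⊗ₖ (1 : Matrix (Fin b) (Fin b) ℂ)) * A) = P * ptrB A := by
  ext i j
  simp only [ptrB, mul_apply, kroneckerMap_apply, Fintype.sum_prod_type, one_apply,
    mul_ite, mul_one, mul_zero, ite_mul, zero_mul, Finset.mul_sum]
  rw [Finset.sum_comm]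
  refine Finset.sum_congr rfl fun m _ => ?_
  rw [Finset.sum_comm]
  refine Finset.sum_congr rfl fun k _ => ?_
  simp

lemma ptrB_mul_kron {a b : ℕ} (P : Matrix (Fin a) (Fin a) ℂ)
    (A : Matrix (Fin a × Fin b) (Fin a × Fin b) ℂ) :
    ptrB (A * (P ⊗ₖ (1 : Matrix (Fin b) (Fin b) ℂ))) = ptrB A * P := by
  ext i j
  simp only [ptrB, mul_apply, kroneckerMap_apply, Fintype.sum_prod_type, one_apply,
    mul_ite, mul_one, mul_zero, Finset.sum_mul]
  rw [Finset.sum_comm]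
  refine Finset.sum_congr rfl fun m _ => ?_
  rw [Finset.sum_comm]
  refine Finset.sum_congr rfl fun k _ => ?_
  simp

lemma kron_one_conjTranspose {a b : ℕ} (P : Matrix (Fin a) (Fin a) ℂ) (hPH : Pᴴ = P) :
    (P ⊗ₖ (1 : Matrix (Fin b) (Fin b) ℂ))ᴴ = P ⊗ₖ (1 : Matrix (Fin b) (Fin b) ℂ) := by
  ext ⟨i, k⟩ ⟨m, n⟩
  have := congrFun (congrFun hPH i) m
  simp only [Matrix.conjTranspose_apply] at this ⊢
  by_cases h : k = n <;> simp [kroneckerMap_apply, Matrix.one_apply, h, ← this]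
  · intro h'; exact absurd h'.symm h

lemma sub_kron_one {a b : ℕ} (P : Matrix (Fin a) (Fin a) ℂ) :
    ((1 - P) ⊗ₖ (1 : Matrix (Fin b) (Fin b) ℂ)) =
      1 - P ⊗ₖ (1 : Matrix (Fin b) (Fin b) ℂ) := by
  ext ⟨i, k⟩ ⟨m, n⟩
  by_cases h : k = n <;>
    simp [kroneckerMap_apply, Matrix.one_apply, Matrix.sub_apply, Prod.ext_iff, h, sub_mul]

lemma posSemidef_ptrB_eq_zero {a b : ℕ}
    {M : Matrix (Fin a × Fin b) (Fin a × Fin b) ℂ} (hM : M.PosSemidef)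
    (h : ptrB M = 0) : M = 0 := by
  obtain ⟨B, rfl⟩ : ∃ B : Matrix (Fin a × Fin b) (Fin a × Fin b) ℂ, M = Bᴴ * B := by
    open scoped MatrixOrder in
    exact ⟨CFC.sqrt M, by
      rw [(CFC.sqrt_nonneg M).posSemidef.isHermitian.eq, CFC.sqrt_mul_sqrt_self M hM.nonneg]⟩
  suffices hB : B = 0 by simp [hB]
  have htr : ∑ x : Fin a × Fin b, ∑ i, Complex.normSq (B i x) = 0 := by
    have h2 : ∀ x : Fin a × Fin b, (Bᴴ * B) x x = ∑ i, (Complex.normSq (B i x) : ℂ) := by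
      intro x
      simp only [mul_apply, Matrix.conjTranspose_apply]
      exact Finset.sum_congr rfl fun i _ => Complex.normSq_eq_conj_mul_self.symm
    have h3 : ∑ x : Fin a × Fin b, (Bᴴ * B) x x = 0 := by
      rw [Fintype.sum_prod_type]
      have h4 : ∀ i j, ptrB (Bᴴ * B) i j = 0 := fun i j => by rw [h]; rfl
      simp only [ptrB] at h4
      exact Finset.sum_eq_zero fun i _ => h4 i i
    rw [show (0:ℂ) = ((0:ℝ):ℂ) by norm_num] at h3
    simp only [h2] at h3
    push_cast at h3
    exact_mod_cast h3
  ext i x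
  have h5 := (Finset.sum_eq_zero_iff_of_nonneg
    (fun x _ => Finset.sum_nonneg fun i _ => Complex.normSq_nonneg _)).mp htr x (by simp)
  have h6 := (Finset.sum_eq_zero_iff_of_nonneg
    (fun i _ => Complex.normSq_nonneg _)).mp h5 i (by simp)
  simpa using Complex.normSq_eq_zero.mp h6

lemma mulvec_fix_iff {n : Type*} [Fintype n] [DecidableEq n]
    (P M : Matrix n n ℂ) :
    (∀ v : n → ℂ, (∃ w, M *ᵥ w = v) → P *ᵥ v = v) ↔ P * M = M := by
  constructor
  · intro h
    ext i j
    have := h (M *ᵥ Pi.single j 1) ⟨_, rfl⟩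
    rw [Matrix.mulVec_mulVec] at this
    have := congrFun this i
    simpa [Matrix.mulVec_single] using this
  · rintro h v ⟨w, rfl⟩
    rw [Matrix.mulVec_mulVec, h]

/-- For positive semidefinite `A` on `H_A ⊗ H_B` and a projection `P` on `H_A`,
`supp(Tr_B A) ⊆ range P` iff `supp A ⊆ range (P ⊗ I_B)`. -/
theorem supp_partialTrace_subset_iff {a b : ℕ}
    (A : Matrix (Fin a × Fin b) (Fin a × Fin b) ℂ) (hA : A.PosSemidef)
    (P : Matrix (Fin a) (Fin a) ℂ) (hP : IsProjection P) :
    (∀ v : Fin a → ℂ, (∃ w, ptrB A *ᵥ w = v) → P *ᵥ v = v) ↔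
      (∀ v : Fin a × Fin b → ℂ, (∃ w, A *ᵥ w = v) →
        (P ⊗ₖ (1 : Matrix (Fin b) (Fin b) ℂ)) *ᵥ v = v) := by
  rw [mulvec_fix_iff, mulvec_fix_iff]
  obtain ⟨hPP, hPH⟩ := hP
  set Q : Matrix (Fin a × Fin b) (Fin a × Fin b) ℂ := P ⊗ₖ (1 : Matrix (Fin b) (Fin b) ℂ) with hQ
  have hptrH : (ptrB A).IsHermitian := by
    ext i j
    simp only [ptrB, Matrix.conjTranspose_apply, star_sum]
    exact Finset.sum_congr rfl fun k _ => hA.isHermitian.apply (i,k) (j,k)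
  constructor
  · intro h
    have h2 : ptrB A * P = ptrB A := by
      have := congrArg Matrix.conjTranspose h
      rwa [Matrix.conjTranspose_mul, hPH, hptrH.eq] at this
    set S : Matrix (Fin a × Fin b) (Fin a × Fin b) ℂ :=
      (1 - P) ⊗ₖ (1 : Matrix (Fin b) (Fin b) ℂ) with hS
    have hSH : Sᴴ = S := kron_one_conjTranspose (1 - P) (by simp [hPH])
    have hSQ : S = 1 - Q := by rw [hS, hQ, sub_kron_one]
    have hMps : (S * A * S).PosSemidef := by
      have := hA.mul_mul_conjTranspose_same S
      rwa [hSH] at this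
    have hptrM : ptrB (S * A * S) = 0 := by
      rw [hS, mul_assoc, ptrB_kron_mul, ptrB_mul_kron]
      have hz : ptrB A * (1 - P) = 0 := by
        rw [Matrix.mul_sub, Matrix.mul_one, h2, sub_self]
      rw [hz, mul_zero]
    have hM0 : S * A * S = 0 := posSemidef_ptrB_eq_zero hMps hptrM
    open scoped MatrixOrder in
    set B := CFC.sqrt A with hB
    open scoped MatrixOrder in
    have hBH : Bᴴ = B := (CFC.sqrt_nonneg A).posSemidef.isHermitian
    open scoped MatrixOrder in
    have hBB : B * B = A := CFC.sqrt_mul_sqrt_self A hA.nonneg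
    have hBS : B * S = 0 := by
      have hz : (B * S)ᴴ * (B * S) = 0 := by
        rw [Matrix.conjTranspose_mul, hBH, hSH, mul_assoc S B (B * S),
          ← mul_assoc B B S, hBB, ← mul_assoc, hM0]
      exact Matrix.conjTranspose_mul_self_eq_zero.mp hz
    have hAS : A * S = 0 := by
      rw [← hBB, mul_assoc, hBS, mul_zero]
    have hAQ : A * Q = A := by
      rw [hSQ] at hAS
      rw [Matrix.mul_sub, Matrix.mul_one, sub_eq_zero] at hAS
      exact hAS.symm
    have hfin := congrArg Matrix.conjTranspose hAQ
    rw [Matrix.conjTranspose_mul, hA.isHermitian.eq] at hfin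
    rwa [hQ, kron_one_conjTranspose P hPH, ← hQ] at hfin
  · intro h
    have := congrArg ptrB h
    rwa [hQ, ptrB_kron_mul] at this
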